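/- Let X be a perfectly normal space, C ⊆ X closed with complement X', let Y be a metric space, and Z ⊆ Y an X'-avoidable subset. Let f : X → Y be continuous with f(x) ∉ Z for all x ∈ C, and let ε : X → ℝ_{>0} be continuous. Then there exists a continuous g : X → Y with g(x) = f(x) for all x ∈ C, and g(x) ∉ Z and d(f(x), g(x)) < ε(x) for all x ∈ X. -/

import Mathlib

open Set Filter Topology

/-- `Z` is `X`-avoidable: every continuous map `X → Y` admits, within any continuous
positive error function, a continuous perturbation whose image misses `Z`. -/
def Avoidable (X : Type) [TopologicalSpace X] {Y : Type} [MetricSpace Y] (Z : Set Y) : Prop :=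
  ∀ f : X → Y, Continuous f → ∀ ε : X → ℝ, Continuous ε → (∀ x, 0 < ε x) →
    ∃ g : X → Y, Continuous g ∧ ∀ x, g x ∉ Z ∧ dist (f x) (g x) < ε x

/-- In a perfectly normal space, every closed set is the precise zero set of a continuous
nonnegative real-valued function. -/
lemma exists_precise_zero_fn {X : Type} [TopologicalSpace X] [PerfectlyNormalSpace X]
    {C : Set X} (hC : IsClosed C) :
    ∃ φ : X → ℝ, Continuous φ ∧ (∀ x, 0 ≤ φ x) ∧ (∀ x ∈ C, φ x = 0) ∧ ∀ x ∉ C, 0 < φ x := by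
  obtain ⟨U, U_open, hU⟩ := (PerfectlyNormalSpace.closed_gdelta hC).eq_iInter_nat
  have A : ∀ n : ℕ, ∃ f : C(X, ℝ), EqOn f 0 C ∧ EqOn f 1 (U n)ᶜ ∧ ∀ x, f x ∈ Icc (0 : ℝ) 1 := by
    intro n
    apply exists_continuous_zero_one_of_isClosed hC (U_open n).isClosed_compl
    rw [disjoint_compl_right_iff_subset, hU]
    exact iInter_subset U n
  choose f fC fU f_range using A
  have u_sum : Summable (fun n : ℕ => (1 / 2 : ℝ) ^ n) :=
    summable_geometric_of_lt_one (by norm_num) (by norm_num)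
  set φ : X → ℝ := fun x => ∑' n, (1 / 2 : ℝ) ^ n * f n x with hφ
  have upos : ∀ n : ℕ, (0 : ℝ) < (1 / 2 : ℝ) ^ n := fun n => by positivity
  have S : ∀ x, Summable (fun n => (1 / 2 : ℝ) ^ n * f n x) := fun x =>
    Summable.of_nonneg_of_le (fun n => mul_nonneg (upos n).le (f_range n x).1)
      (fun n => mul_le_of_le_one_right (upos n).le (f_range n x).2) u_sum
  refine ⟨φ, ?_, fun x => tsum_nonneg fun n => mul_nonneg (upos n).le (f_range n x).1,
    fun x hx => ?_, fun x hx => ?_⟩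
  · apply continuous_tsum (fun n => continuous_const.mul (f n).continuous) u_sum (fun n x => ?_)
    show ‖(1 / 2 : ℝ) ^ n * f n x‖ ≤ (1 / 2 : ℝ) ^ n
    rw [Real.norm_eq_abs, abs_of_nonneg (mul_nonneg (upos n).le (f_range n x).1)]
    exact mul_le_of_le_one_right (upos n).le (f_range n x).2
  · have h0 : ∀ n, (1 / 2 : ℝ) ^ n * f n x = 0 := fun n => by
      rw [fC n hx]; simp
    calc φ x = ∑' _ : ℕ, (0 : ℝ) := tsum_congr h0
      _ = 0 := tsum_zero
  · obtain ⟨n, hn⟩ : ∃ n, x ∉ U n := by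
      by_contra h
      push_neg at h
      exact hx (hU ▸ mem_iInter.mpr h)
    have h1 : (1 / 2 : ℝ) ^ n * f n x = (1 / 2 : ℝ) ^ n := by
      rw [fU n hn]; simp
    calc (0 : ℝ) < (1 / 2 : ℝ) ^ n * f n x := by rw [h1]; exact upos n
      _ ≤ φ x := Summable.le_tsum (S x) n fun m _ => mul_nonneg (upos m).le (f_range m x).1

theorem stmt_8 (X : Type) [TopologicalSpace X] [PerfectlyNormalSpace X]
    (C : Set X) (hC : IsClosed C)
    (Y : Type) [MetricSpace Y] (Z : Set Y)
    (hZ : Avoidable ↥(Cᶜ) Z)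
    (f : X → Y) (hf : Continuous f) (hfC : ∀ x ∈ C, f x ∉ Z)
    (ε : X → ℝ) (hε : Continuous ε) (hεpos : ∀ x, 0 < ε x) :
    ∃ g : X → Y, Continuous g ∧ (∀ x ∈ C, g x = f x) ∧
      ∀ x, g x ∉ Z ∧ dist (f x) (g x) < ε x := by
  classical
  obtain ⟨φ, hφc, hφ0, hφC, hφpos⟩ := exists_precise_zero_fn hC
  set δ : ↥(Cᶜ) → ℝ := fun x => min (ε x) (φ x) with hδ
  have hδc : Continuous δ :=
    ((hε.comp continuous_subtype_val).min (hφc.comp continuous_subtype_val))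
  have hδpos : ∀ x : ↥(Cᶜ), 0 < δ x := fun x =>
    lt_min (hεpos x) (hφpos x x.2)
  obtain ⟨g₀, hg₀c, hg₀⟩ := hZ (fun x => f x) (hf.comp continuous_subtype_val) δ hδc hδpos
  set g : X → Y := fun x => if h : x ∈ C then f x else g₀ ⟨x, h⟩ with hg
  have hgC : ∀ x ∈ C, g x = f x := fun x hx => by simp only [hg]; rw [dif_pos hx]
  have hgrestrict : ∀ x : ↥(Cᶜ), g ↑x = g₀ x := fun x => by
    simp only [hg]; rw [dif_neg x.2]
  refine ⟨g, ?_, hgC, fun x => ?_⟩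
  · rw [continuous_iff_continuousAt]
    intro x
    by_cases hx : x ∈ C
    · -- continuity at a point of C
      rw [ContinuousAt, Metric.tendsto_nhds]
      intro r hr
      have hgx : g x = f x := hgC x hx
      have hA : ∀ᶠ y in 𝓝 x, dist (f y) (f x) < r / 2 := by
        have := hf.continuousAt (x := x)
        rw [ContinuousAt, Metric.tendsto_nhds] at this
        exact this (r / 2) (by linarith)
      have hB : ∀ᶠ y in 𝓝 x, φ y < r / 2 := by
        have h0 : φ x < r / 2 := by rw [hφC x hx]; linarith
        exact (hφc.continuousAt (x := x)).eventually_lt_const h0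
      filter_upwards [hA, hB] with y hy1 hy2
      rw [hgx]
      by_cases hy : y ∈ C
      · rw [hgC y hy]; linarith
      · rw [hgrestrict ⟨y, hy⟩]
        have h1 : dist (f y) (g₀ ⟨y, hy⟩) < δ ⟨y, hy⟩ := (hg₀ ⟨y, hy⟩).2
        have h2 : δ ⟨y, hy⟩ ≤ φ y := min_le_right _ _
        calc dist (g₀ ⟨y, hy⟩) (f x) ≤ dist (g₀ ⟨y, hy⟩) (f y) + dist (f y) (f x) :=
              dist_triangle _ _ _
          _ < r / 2 + r / 2 := by
              rw [dist_comm]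
              exact add_lt_add (lt_of_lt_of_le h1 (h2.trans hy2.le)) hy1
          _ = r := by ring
    · -- continuity at a point of Cᶜ
      have hcont : ContinuousOn g Cᶜ := by
        rw [continuousOn_iff_continuous_restrict]
        have : Set.restrict Cᶜ g = g₀ := funext fun y => hgrestrict y
        rw [show Cᶜ.domRestrict g = g₀ from this]
        exact hg₀c
      exact hcont.continuousAt (hC.isOpen_compl.mem_nhds hx)
  · by_cases hx : x ∈ C
    · rw [hgC x hx, dist_self]
      exact ⟨hfC x hx, hεpos x⟩
    · rw [hgrestrict ⟨x, hx⟩]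
      exact ⟨(hg₀ ⟨x, hx⟩).1, lt_of_lt_of_le (hg₀ ⟨x, hx⟩).2 (min_le_left _ _)⟩
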